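/- Let X, Y be real Hilbert spaces, T : X → Y bounded linear, ρ = T f† with f† ∈ (ker T)^⊥. Suppose for each δ > 0 we have data ρ^δ ∈ Y with ‖ρ − ρ^δ‖ ≤ δ and a bounded linear operator T^δ : X → Y with ‖T f† − T^δ f†‖ ≤ C δ for a constant C ≥ 0, and a parameter α(δ) > 0 with α(δ) → 0 and δ²/α(δ) → 0 as δ → 0. Define f_α^δ = ((T^δ)* T^δ + α(δ) I)⁻¹ (T^δ)* ρ^δ. Then ‖f_α^δ − f†‖ ≤ α(δ)^{-1/2}(δ + Cδ) + ‖α(δ)((T^δ)* T^δ + α(δ) I)⁻¹ f†‖, and if additionally T^δ → T in operator norm as δ → 0, then f_α^δ → f† as δ → 0. -/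

import Mathlib

open Filter

section
variable {X Y : Type*} [NormedAddCommGroup X] [InnerProductSpace ℝ X] [CompleteSpace X]
  [NormedAddCommGroup Y] [InnerProductSpace ℝ Y] [CompleteSpace Y]

open ContinuousLinearMap in
lemma tikAux (B : X →L[ℝ] Y) (a : ℝ) (ha : 0 < a) (S : X →L[ℝ] X)
    (hS1 : ((adjoint B).comp B + a • ContinuousLinearMap.id ℝ X).comp S
      = ContinuousLinearMap.id ℝ X) :
    (∀ y : Y, ‖S (adjoint B y)‖ ≤ (Real.sqrt a)⁻¹ * ‖y‖) ∧ ∀ u : X, a * ‖S u‖ ≤ ‖u‖ := by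
  have key : ∀ z : X, adjoint B (B (S z)) + a • (S z) = z := by
    intro z
    have h := ContinuousLinearMap.ext_iff.mp hS1 z
    simpa [ContinuousLinearMap.comp_apply, ContinuousLinearMap.add_apply,
      ContinuousLinearMap.smul_apply] using h
  have sa : 0 < Real.sqrt a := Real.sqrt_pos.mpr ha
  have sa2 : Real.sqrt a * Real.sqrt a = a := Real.mul_self_sqrt ha.le
  have main : ∀ z : X, (inner ℝ z (S z) : ℝ) = ‖B (S z)‖^2 + a * ‖S z‖^2 := by
    intro z
    have e : (inner ℝ z (S z) : ℝ)
        = inner ℝ (adjoint B (B (S z)) + a • (S z)) (S z) := by rw [key z]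
    rw [e, inner_add_left, real_inner_smul_left,
      ContinuousLinearMap.adjoint_inner_left, real_inner_self_eq_norm_sq,
      real_inner_self_eq_norm_sq]
  constructor
  · intro y
    set x := S (adjoint B y) with hx
    have h1 : (inner ℝ (adjoint B y) x : ℝ) = ‖B x‖^2 + a * ‖x‖^2 := main _
    have h2 : (inner ℝ (adjoint B y) x : ℝ) = inner ℝ y (B x) :=
      ContinuousLinearMap.adjoint_inner_left _ _ _
    have h3 : (inner ℝ y (B x) : ℝ) ≤ ‖y‖ * ‖B x‖ := real_inner_le_norm _ _
    rw [inv_mul_eq_div, le_div_iff₀ sa]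
    nlinarith [norm_nonneg x, norm_nonneg y, norm_nonneg (B x),
      sq_nonneg (‖B x‖ - ‖y‖/2), sq_nonneg (‖x‖ * Real.sqrt a - ‖y‖),
      mul_nonneg (norm_nonneg x) sa.le]
  · intro u
    have h1 : (inner ℝ u (S u) : ℝ) = ‖B (S u)‖^2 + a * ‖S u‖^2 := main u
    have h3 : (inner ℝ u (S u) : ℝ) ≤ ‖u‖ * ‖S u‖ := real_inner_le_norm _ _
    rcases eq_or_lt_of_le (norm_nonneg (S u)) with h0 | h0
    · rw [← h0, mul_zero]; exact norm_nonneg u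
    · nlinarith [sq_nonneg ‖B (S u)‖]

lemma tik_mem_closure (T : X →L[ℝ] Y) (f : X) (hf : f ∈ (LinearMap.ker (T : X →ₗ[ℝ] Y))ᗮ) :
    f ∈ closure ((LinearMap.range (ContinuousLinearMap.adjoint T : Y →ₗ[ℝ] X) : Submodule ℝ X) : Set X) := by
  have hker : (LinearMap.range (ContinuousLinearMap.adjoint T : Y →ₗ[ℝ] X))ᗮ
      = (LinearMap.ker (T : X →ₗ[ℝ] Y) : Submodule ℝ X) := by
    ext x
    simp only [Submodule.mem_orthogonal, LinearMap.mem_ker]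
    constructor
    · intro h
      have h2 := h (ContinuousLinearMap.adjoint T (T x)) ⟨T x, rfl⟩
      rw [ContinuousLinearMap.adjoint_inner_left] at h2
      exact inner_self_eq_zero.mp h2
    · rintro h u ⟨y, rfl⟩
      rw [ContinuousLinearMap.coe_coe, ContinuousLinearMap.adjoint_inner_left, show T x = 0 from h, inner_zero_right]
  rw [← hker, Submodule.orthogonal_orthogonal_eq_closure] at hf
  exact hf
end

set_option maxHeartbeats 1000000 in
theorem tikhonov_convergence_perturbed
    {X Y : Type*} [NormedAddCommGroup X] [InnerProductSpace ℝ X] [CompleteSpace X]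
    [NormedAddCommGroup Y] [InnerProductSpace ℝ Y] [CompleteSpace Y]
    (T : X →L[ℝ] Y) (fdag : X) (ρ : Y) (hρ : ρ = T fdag)
    (hfdag : fdag ∈ (LinearMap.ker (T : X →ₗ[ℝ] Y))ᗮ)
    (ρδ : ℝ → Y) (Tδ : ℝ → X →L[ℝ] Y) (C : ℝ) (hC : 0 ≤ C)
    (hdata : ∀ δ : ℝ, 0 < δ → ‖ρ - ρδ δ‖ ≤ δ)
    (hop : ∀ δ : ℝ, 0 < δ → ‖T fdag - (Tδ δ) fdag‖ ≤ C * δ)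
    (α : ℝ → ℝ) (hαpos : ∀ δ : ℝ, 0 < δ → 0 < α δ)
    (hα0 : Tendsto α (nhdsWithin 0 (Set.Ioi 0)) (nhds 0))
    (hδ2α : Tendsto (fun δ : ℝ => δ ^ 2 / α δ) (nhdsWithin 0 (Set.Ioi 0)) (nhds 0))
    (S_inv : ℝ → X →L[ℝ] X)
    (hS : ∀ δ : ℝ, 0 < δ →
      ((ContinuousLinearMap.adjoint (Tδ δ)).comp (Tδ δ)
          + α δ • ContinuousLinearMap.id ℝ X).comp (S_inv δ)
        = ContinuousLinearMap.id ℝ X ∧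
      (S_inv δ).comp ((ContinuousLinearMap.adjoint (Tδ δ)).comp (Tδ δ)
          + α δ • ContinuousLinearMap.id ℝ X)
        = ContinuousLinearMap.id ℝ X)
    (fαδ : ℝ → X)
    (hfαδ : ∀ δ : ℝ, 0 < δ →
      fαδ δ = S_inv δ ((ContinuousLinearMap.adjoint (Tδ δ)) (ρδ δ))) :
    (∀ δ : ℝ, 0 < δ →
      ‖fαδ δ - fdag‖ ≤ (α δ) ^ (-(1:ℝ)/2) * (δ + C * δ) + ‖α δ • (S_inv δ fdag)‖) ∧
    (Tendsto (fun δ : ℝ => ‖Tδ δ - T‖) (nhdsWithin 0 (Set.Ioi 0)) (nhds 0) →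
      Tendsto fαδ (nhdsWithin 0 (Set.Ioi 0)) (nhds fdag)) := by
  have part1 : ∀ δ : ℝ, 0 < δ →
      ‖fαδ δ - fdag‖ ≤ (α δ) ^ (-(1:ℝ)/2) * (δ + C * δ) + ‖α δ • (S_inv δ fdag)‖ := by
    intro δ hδ
    obtain ⟨hS1, hS2⟩ := hS δ hδ
    have ha := hαpos δ hδ
    obtain ⟨hA, hB⟩ := tikAux (Tδ δ) (α δ) ha (S_inv δ) hS1
    -- decomposition
    have hf : S_inv δ (ContinuousLinearMap.adjoint (Tδ δ) (Tδ δ fdag))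
        + α δ • S_inv δ fdag = fdag := by
      have h := ContinuousLinearMap.ext_iff.mp hS2 fdag
      simpa [ContinuousLinearMap.comp_apply, ContinuousLinearMap.add_apply,
        ContinuousLinearMap.smul_apply, map_add, map_smul] using h
    have hdec : fαδ δ - fdag
        = S_inv δ (ContinuousLinearMap.adjoint (Tδ δ) (ρδ δ - Tδ δ fdag))
          - α δ • S_inv δ fdag := by
      rw [hfαδ δ hδ, map_sub, map_sub, sub_sub, hf]
    have hrhs : ‖ρδ δ - Tδ δ fdag‖ ≤ δ + C * δ := by
      have e : ρδ δ - Tδ δ fdag = -(ρ - ρδ δ) + (T fdag - Tδ δ fdag) := by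
        rw [hρ]; abel
      calc ‖ρδ δ - Tδ δ fdag‖ = ‖-(ρ - ρδ δ) + (T fdag - Tδ δ fdag)‖ := by rw [e]
        _ ≤ ‖-(ρ - ρδ δ)‖ + ‖T fdag - Tδ δ fdag‖ := norm_add_le _ _
        _ ≤ δ + C * δ := by rw [norm_neg]; exact add_le_add (hdata δ hδ) (hop δ hδ)
    have hpow : (α δ) ^ (-(1:ℝ)/2) = (Real.sqrt (α δ))⁻¹ := by
      rw [Real.sqrt_eq_rpow, ← Real.rpow_neg ha.le]
      norm_num
    calc ‖fαδ δ - fdag‖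
        ≤ ‖S_inv δ (ContinuousLinearMap.adjoint (Tδ δ) (ρδ δ - Tδ δ fdag))‖
          + ‖α δ • S_inv δ fdag‖ := by rw [hdec]; exact norm_sub_le _ _
      _ ≤ (Real.sqrt (α δ))⁻¹ * ‖ρδ δ - Tδ δ fdag‖ + ‖α δ • S_inv δ fdag‖ :=
          add_le_add (hA _) le_rfl
      _ ≤ (Real.sqrt (α δ))⁻¹ * (δ + C * δ) + ‖α δ • S_inv δ fdag‖ := by
          have : (0:ℝ) ≤ (Real.sqrt (α δ))⁻¹ := by positivity
          gcongr
      _ = (α δ) ^ (-(1:ℝ)/2) * (δ + C * δ) + ‖α δ • S_inv δ fdag‖ := by rw [hpow]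
  refine ⟨part1, ?_⟩
  intro hTconv
  rw [tendsto_iff_norm_sub_tendsto_zero]
  -- the two vanishing pieces
  have hterm1 : Tendsto (fun δ : ℝ => (1 + C) * Real.sqrt (δ ^ 2 / α δ))
      (nhdsWithin 0 (Set.Ioi 0)) (nhds 0) := by
    have t1 : Tendsto (fun δ : ℝ => Real.sqrt (δ ^ 2 / α δ))
        (nhdsWithin 0 (Set.Ioi 0)) (nhds 0) := by
      have := (Real.continuous_sqrt.tendsto 0).comp hδ2α
      simpa [Function.comp_def] using this
    simpa using t1.const_mul (1 + C)
  have hterm2 : Tendsto (fun δ : ℝ => ‖α δ • (S_inv δ fdag)‖)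
      (nhdsWithin 0 (Set.Ioi 0)) (nhds 0) := by
    rw [Metric.tendsto_nhds]
    intro ε hε
    have hcl := tik_mem_closure T fdag hfdag
    rw [Metric.mem_closure_iff] at hcl
    obtain ⟨u, hu, hdu⟩ := hcl (ε / 3) (by positivity)
    obtain ⟨w, rfl⟩ := hu
    have hw1 : ‖fdag - ContinuousLinearMap.adjoint T w‖ < ε / 3 := by
      rw [← dist_eq_norm]; exact hdu
    -- eventually the operator-error and sqrt-α terms are small
    have e1 : ∀ᶠ δ in nhdsWithin (0:ℝ) (Set.Ioi 0), ‖Tδ δ - T‖ * ‖w‖ < ε / 3 := by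
      have := hTconv.mul_const ‖w‖
      rw [zero_mul] at this
      exact this.eventually_lt_const (by positivity)
    have e2 : ∀ᶠ δ in nhdsWithin (0:ℝ) (Set.Ioi 0), Real.sqrt (α δ) * ‖w‖ < ε / 3 := by
      have t : Tendsto (fun δ : ℝ => Real.sqrt (α δ) * ‖w‖)
          (nhdsWithin 0 (Set.Ioi 0)) (nhds 0) := by
        have := ((Real.continuous_sqrt.tendsto 0).comp hα0).mul_const ‖w‖
        simpa using this
      exact t.eventually_lt_const (by positivity)
    filter_upwards [e1, e2, self_mem_nhdsWithin] with δ he1 he2 hδ'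
    have hδ : (0:ℝ) < δ := hδ'
    obtain ⟨hS1, hS2⟩ := hS δ hδ
    have ha := hαpos δ hδ
    obtain ⟨hA, hB⟩ := tikAux (Tδ δ) (α δ) ha (S_inv δ) hS1
    have sa2 : Real.sqrt (α δ) * Real.sqrt (α δ) = α δ := Real.mul_self_sqrt ha.le
    rw [dist_zero_right, Real.norm_eq_abs, abs_norm]
    -- split S_inv δ fdag into three parts
    have harg : fdag - ContinuousLinearMap.adjoint T w
          + (ContinuousLinearMap.adjoint T w - ContinuousLinearMap.adjoint (Tδ δ) w)
          + ContinuousLinearMap.adjoint (Tδ δ) w = fdag := by abel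
    have hsplit : α δ • S_inv δ (fdag - ContinuousLinearMap.adjoint T w)
          + α δ • S_inv δ (ContinuousLinearMap.adjoint T w
              - ContinuousLinearMap.adjoint (Tδ δ) w)
          + α δ • S_inv δ (ContinuousLinearMap.adjoint (Tδ δ) w)
        = α δ • S_inv δ fdag := by
      rw [← smul_add, ← smul_add, ← map_add, ← map_add, harg]
    have b1 : ‖α δ • S_inv δ (fdag - ContinuousLinearMap.adjoint T w)‖
        ≤ ‖fdag - ContinuousLinearMap.adjoint T w‖ := by
      rw [norm_smul, Real.norm_eq_abs, abs_of_pos ha]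
      exact hB _
    have b2 : ‖α δ • S_inv δ (ContinuousLinearMap.adjoint T w
        - ContinuousLinearMap.adjoint (Tδ δ) w)‖ ≤ ‖Tδ δ - T‖ * ‖w‖ := by
      rw [norm_smul, Real.norm_eq_abs, abs_of_pos ha]
      refine le_trans (hB _) ?_
      have e : ContinuousLinearMap.adjoint T w - ContinuousLinearMap.adjoint (Tδ δ) w
          = (ContinuousLinearMap.adjoint (T - Tδ δ)) w := by
        rw [map_sub]; simp [ContinuousLinearMap.sub_apply]
      rw [e]
      calc ‖(ContinuousLinearMap.adjoint (T - Tδ δ)) w‖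
          ≤ ‖ContinuousLinearMap.adjoint (T - Tδ δ)‖ * ‖w‖ :=
            ContinuousLinearMap.le_opNorm _ _
        _ = ‖T - Tδ δ‖ * ‖w‖ := by rw [ContinuousLinearMap.adjoint.norm_map]
        _ = ‖Tδ δ - T‖ * ‖w‖ := by rw [norm_sub_rev]
    have b3 : ‖α δ • S_inv δ (ContinuousLinearMap.adjoint (Tδ δ) w)‖
        ≤ Real.sqrt (α δ) * ‖w‖ := by
      rw [norm_smul, Real.norm_eq_abs, abs_of_pos ha]
      calc α δ * ‖S_inv δ (ContinuousLinearMap.adjoint (Tδ δ) w)‖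
          ≤ α δ * ((Real.sqrt (α δ))⁻¹ * ‖w‖) := by
            have := hA w
            gcongr
          _ = (α δ / Real.sqrt (α δ)) * ‖w‖ := by
            rw [div_eq_mul_inv]; ring
          _ = Real.sqrt (α δ) * ‖w‖ := by rw [Real.div_sqrt]
    calc ‖α δ • S_inv δ fdag‖
        ≤ ‖α δ • S_inv δ (fdag - ContinuousLinearMap.adjoint T w)‖
          + ‖α δ • S_inv δ (ContinuousLinearMap.adjoint T w
              - ContinuousLinearMap.adjoint (Tδ δ) w)‖
          + ‖α δ • S_inv δ (ContinuousLinearMap.adjoint (Tδ δ) w)‖ := by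
          rw [← hsplit]; exact norm_add₃_le
      _ < ε / 3 + ε / 3 + ε / 3 :=
          add_lt_add_of_lt_of_le (add_lt_add_of_lt_of_le
            (lt_of_le_of_lt b1 hw1) (le_of_lt (lt_of_le_of_lt b2 he1)))
            (le_of_lt (lt_of_le_of_lt b3 he2))
      _ = ε := by ring
  have hbound : ∀ᶠ δ in nhdsWithin (0:ℝ) (Set.Ioi 0),
      ‖fαδ δ - fdag‖ ≤ (1 + C) * Real.sqrt (δ ^ 2 / α δ) + ‖α δ • (S_inv δ fdag)‖ := by
    filter_upwards [self_mem_nhdsWithin] with δ hδ'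
    have hδ : (0:ℝ) < δ := hδ'
    have ha := hαpos δ hδ
    have e : (α δ) ^ (-(1:ℝ)/2) * (δ + C * δ) = (1 + C) * Real.sqrt (δ ^ 2 / α δ) := by
      have hp : (α δ) ^ (-(1:ℝ)/2) = ((α δ) ^ ((1:ℝ)/2))⁻¹ := by
        rw [neg_div, Real.rpow_neg ha.le]
      rw [Real.sqrt_div (sq_nonneg δ), Real.sqrt_sq hδ.le, Real.sqrt_eq_rpow, hp,
        div_eq_mul_inv]
      ring
    calc ‖fαδ δ - fdag‖ ≤ (α δ) ^ (-(1:ℝ)/2) * (δ + C * δ) + ‖α δ • (S_inv δ fdag)‖ :=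
          part1 δ hδ
      _ = (1 + C) * Real.sqrt (δ ^ 2 / α δ) + ‖α δ • (S_inv δ fdag)‖ := by rw [e]
  have hsum := hterm1.add hterm2
  rw [add_zero] at hsum
  exact squeeze_zero' (Eventually.of_forall fun δ => norm_nonneg _) hbound hsum
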